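/- arXiv:2306.15594 — 2 statements merged into one kernel-verified Lean document; each statement's English description precedes it below -/
import Mathlib

section
/- The infinite product y₀(q) = ∏_{m≥1} (1-q^{2m})⁴(1-q^{7m})⁸ / ((1-q^m)⁸(1-q^{14m})⁴), viewed as a formal power series in q with integer coefficients, satisfies y₀ ≡ 1 (mod 8), i.e., every coefficient of y₀ − 1 is divisible by 8. -/
set_option maxHeartbeats 800000


open PowerSeries Finset

/-- `y₀` is the power series `∏_{m≥1} (1-q^{2m})^4 (1-q^{7m})^8 / ((1-q^m)^8 (1-q^{14m})^4)`,
encoded by clearing denominators and comparing coefficients of partial products. -/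
def IsY0 (y0 : PowerSeries ℤ) : Prop :=
  ∀ n : ℕ,
    PowerSeries.coeff n
        (y0 * ∏ m ∈ Finset.range (n + 1),
          ((1 - X ^ (m + 1)) ^ 8 * (1 - X ^ (14 * (m + 1))) ^ 4)) =
      PowerSeries.coeff n
        (∏ m ∈ Finset.range (n + 1),
          ((1 - X ^ (2 * (m + 1))) ^ 4 * (1 - X ^ (7 * (m + 1))) ^ 8))

lemma eight_eq_zero : ((8 : ℕ) : PowerSeries (ZMod 8)) = 0 := by
  have h : ((8 : ℕ) : ZMod 8) = 0 := by decide
  calc ((8 : ℕ) : PowerSeries (ZMod 8)) = C ((8 : ℕ) : ZMod 8) :=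
        (map_natCast (C) 8).symm
    _ = 0 := by rw [h, map_zero]

lemma key8 (a : PowerSeries (ZMod 8)) : (1 - a) ^ 8 = (1 - a ^ 2) ^ 4 := by
  have h : (1 - a) ^ 8 - (1 - a ^ 2) ^ 4
      = ((8 : ℕ) : PowerSeries (ZMod 8)) * (-(a * (1 + a ^ 2) * (1 - a) ^ 4)) := by
    push_cast
    ring
  rw [eight_eq_zero, zero_mul] at h
  exact sub_eq_zero.mp h

theorem y0_congruent_one_mod_eight (y0 : PowerSeries ℤ) (hy : IsY0 y0) :
    ∀ n : ℕ, (8 : ℤ) ∣ PowerSeries.coeff n (y0 - 1) := by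
  set φ : ℤ →+* ZMod 8 := Int.castRingHom (ZMod 8) with hφ
  set f : PowerSeries (ZMod 8) := PowerSeries.map φ y0 with hf
  -- the common partial product over ZMod 8
  set A : ℕ → PowerSeries (ZMod 8) := fun n =>
    ∏ m ∈ Finset.range (n + 1),
      ((1 - (X : PowerSeries (ZMod 8)) ^ (2 * (m + 1))) ^ 4
        * (1 - (X : PowerSeries (ZMod 8)) ^ (14 * (m + 1))) ^ 4) with hA
  -- mapped identity
  have hmain : ∀ n : ℕ,
      PowerSeries.coeff n (f * A n) = PowerSeries.coeff n (A n) := by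
    intro n
    have h := congrArg φ (hy n)
    rw [← PowerSeries.coeff_map, ← PowerSeries.coeff_map] at h
    rw [map_mul, map_prod, map_prod] at h
    simp only [map_mul, map_pow, map_sub, map_one, PowerSeries.map_X] at h
    have hL : (∏ m ∈ Finset.range (n + 1),
        ((1 - (X : PowerSeries (ZMod 8)) ^ (m + 1)) ^ 8
          * (1 - (X : PowerSeries (ZMod 8)) ^ (14 * (m + 1))) ^ 4)) = A n := by
      rw [hA]
      apply Finset.prod_congr rfl
      intro m _
      have hk := key8 ((X : PowerSeries (ZMod 8)) ^ (m + 1))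
      rw [← pow_mul, mul_comm (m + 1) 2] at hk
      rw [hk]
    have hR : (∏ m ∈ Finset.range (n + 1),
        ((1 - (X : PowerSeries (ZMod 8)) ^ (2 * (m + 1))) ^ 4
          * (1 - (X : PowerSeries (ZMod 8)) ^ (7 * (m + 1))) ^ 8)) = A n := by
      rw [hA]
      apply Finset.prod_congr rfl
      intro m _
      have hk := key8 ((X : PowerSeries (ZMod 8)) ^ (7 * (m + 1)))
      rw [← pow_mul, show 7 * (m + 1) * 2 = 14 * (m + 1) by ring] at hk
      rw [hk]
    rw [hL, hR] at h
    exact h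
  -- constant coefficient of A n is 1
  have hA0 : ∀ n : ℕ, PowerSeries.coeff 0 (A n) = 1 := by
    intro n
    rw [hA]
    simp only [PowerSeries.coeff_zero_eq_constantCoeff, map_prod, map_mul, map_pow, map_sub,
      map_one, PowerSeries.constantCoeff_X]
    simp
  -- coefficients of f agree with those of 1
  have hcoef : ∀ n : ℕ, PowerSeries.coeff n f = PowerSeries.coeff n 1 := by
    intro n
    induction n using Nat.strong_induction_on with
    | _ n ih =>
      have h1 : PowerSeries.coeff n (f * A n)
          = PowerSeries.coeff n ((1 : PowerSeries (ZMod 8)) * A n) := by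
        rw [one_mul]; exact hmain n
      rw [PowerSeries.coeff_mul, PowerSeries.coeff_mul] at h1
      have hmem : ((n, 0) : ℕ × ℕ) ∈ Finset.HasAntidiagonal.antidiagonal n := by
        simp [Finset.HasAntidiagonal.mem_antidiagonal]
      rw [← Finset.add_sum_erase _ _ hmem, ← Finset.add_sum_erase _ _ hmem] at h1
      have hrest : ∑ p ∈ (Finset.HasAntidiagonal.antidiagonal n).erase (n, 0),
            PowerSeries.coeff p.1 f * PowerSeries.coeff p.2 (A n)
          = ∑ p ∈ (Finset.HasAntidiagonal.antidiagonal n).erase (n, 0),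
            PowerSeries.coeff p.1 (1 : PowerSeries (ZMod 8))
              * PowerSeries.coeff p.2 (A n) := by
        apply Finset.sum_congr rfl
        intro p hp
        rcases Finset.mem_erase.mp hp with ⟨hne, hmem'⟩
        have hsum : p.1 + p.2 = n := Finset.HasAntidiagonal.mem_antidiagonal.mp hmem'
        have hlt : p.1 < n := by
          rcases lt_or_eq_of_le (Nat.le.intro hsum) with h | h
          · exact h
          · exfalso; apply hne
            have : p.2 = 0 := by omega
            exact Prod.ext (by omega) this
        rw [ih p.1 hlt]
      rw [hrest] at h1
      have h2 := add_right_cancel h1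
      rw [hA0 n, mul_one, mul_one] at h2
      exact h2
  have hgen : ∀ n : ℕ, φ (PowerSeries.coeff n (y0 - 1)) = 0 := by
    intro n
    have h := hcoef n
    rw [hf, PowerSeries.coeff_map] at h
    have hsub : PowerSeries.coeff n (y0 - 1)
        = PowerSeries.coeff n y0 - PowerSeries.coeff n 1 := map_sub _ _ _
    rw [hsub, map_sub, h, PowerSeries.coeff_one, PowerSeries.coeff_one, apply_ite φ,
      map_one, map_zero, sub_self]
  intro n
  exact (ZMod.intCast_zmod_eq_zero_iff_dvd _ 8).mp (hgen n)
end

section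
/- Let D₂(q) = ∏_{m≥1}(1-q^{2m})²/(1-q^m)⁷ = ∑ d₂(n)q^n, and for α ≥ 1 let L_{2α−1}(q) = (1/D₂(q⁷))·∑_{n≥0} d₂(7^{2α−1}n + λ_{2α−1}) q^{n+1}, where λ_{2α−1} = (1+7^{2α−1})/8. Then U₇(L_{2α−1}) = (1/D₂(q))·∑_{n≥0} d₂(7^{2α}n + λ_{2α}) q^{n+1}, where λ_{2α} = (1+7^{2α+1})/8. -/
open PowerSeries Finset

/-- `d` is the coefficient sequence of `D₂(q) = ∏_{m≥1} (1-q^{2m})^2 / (1-q^m)^7`. -/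
def IsD2 (d : ℕ → ℤ) : Prop :=
  ∀ n : ℕ,
    PowerSeries.coeff n
        ((PowerSeries.mk d) * ∏ m ∈ Finset.range (n + 1), (1 - X ^ (m + 1)) ^ 7) =
      PowerSeries.coeff n
        (∏ m ∈ Finset.range (n + 1), (1 - X ^ (2 * (m + 1))) ^ 2)

/-- The operator `U₇`. -/
noncomputable def Uop (ℓ : ℕ) (f : PowerSeries ℤ) : PowerSeries ℤ :=
  PowerSeries.mk fun n => PowerSeries.coeff (ℓ * n) f

/-- `expand ℓ f` is the series `f(q^ℓ)`. -/
noncomputable def expandPS (ℓ : ℕ) (f : PowerSeries ℤ) : PowerSeries ℤ :=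
  PowerSeries.mk fun n => if ℓ ∣ n then PowerSeries.coeff (n / ℓ) f else 0

lemma Uop_mul_expand (f g : PowerSeries ℤ) :
    Uop 7 (f * expandPS 7 g) = Uop 7 f * g := by
  ext n
  simp only [Uop, expandPS, coeff_mk, coeff_mul, mul_ite, mul_zero]
  rw [← Finset.sum_filter]
  refine Finset.sum_nbij' (fun p => (p.1 / 7, p.2 / 7)) (fun p => (7 * p.1, 7 * p.2))
    ?_ ?_ ?_ ?_ ?_
  · rintro ⟨x, y⟩ hp
    simp only [Finset.mem_filter, HasAntidiagonal.mem_antidiagonal] at hp ⊢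
    obtain ⟨h1, h2⟩ := hp
    have hx : 7 ∣ x := by omega
    omega
  · rintro ⟨a, b⟩ hp
    simp only [Finset.mem_filter, HasAntidiagonal.mem_antidiagonal] at hp ⊢
    omega
  · rintro ⟨x, y⟩ hp
    simp only [Finset.mem_filter, HasAntidiagonal.mem_antidiagonal] at hp
    obtain ⟨h1, h2⟩ := hp
    have hx : 7 ∣ x := by omega
    simp only [Prod.mk.injEq]
    omega
  · rintro ⟨a, b⟩ hp
    simp only [Prod.mk.injEq]
    omega
  · rintro ⟨x, y⟩ hp
    simp only [Finset.mem_filter, HasAntidiagonal.mem_antidiagonal] at hp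
    obtain ⟨h1, h2⟩ := hp
    have hx : 7 ∣ x := by omega
    rw [Nat.mul_div_cancel' hx]

theorem U7_odd_step (d : ℕ → ℤ) (hd : IsD2 d) (α : ℕ) (hα : 1 ≤ α)
    (L : PowerSeries ℤ)
    (hL : L * expandPS 7 (PowerSeries.mk d) =
      PowerSeries.mk fun n =>
        if n = 0 then 0 else d (7 ^ (2 * α - 1) * (n - 1) + (1 + 7 ^ (2 * α - 1)) / 8)) :
    Uop 7 L * PowerSeries.mk d =
      PowerSeries.mk fun n =>
        if n = 0 then 0 else d (7 ^ (2 * α) * (n - 1) + (1 + 7 ^ (2 * α + 1)) / 8) := by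
  rw [← Uop_mul_expand, hL]
  ext n
  simp only [Uop, coeff_mk]
  rcases n with _ | m
  · simp
  · have h7 : (7 : ℕ) * (m + 1) ≠ 0 := by omega
    simp only [h7, if_neg, Nat.succ_ne_zero, if_false]
    congr 1
    -- arithmetic
    set k := 2 * α - 1 with hk
    have hkodd : k % 2 = 1 := by omega
    have h2a : 2 * α = k + 1 := by omega
    rw [h2a]
    -- 8 ∣ 1 + 7^k since k is odd
    have hdvd : (1 + 7 ^ k) % 8 = 0 := by
      obtain ⟨β, hβ⟩ : ∃ β, k = 2 * β + 1 := ⟨k / 2, by omega⟩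
      rw [hβ]
      have : 7 ^ (2 * β + 1) % 8 = 7 := by
        clear hβ
        induction β with
        | zero => rfl
        | succ b ih =>
          have h : 2 * (b + 1) + 1 = (2 * b + 1) + 2 := by ring
          rw [h, pow_add]
          omega
      omega
    obtain ⟨c, hc⟩ : ∃ c, 1 + 7 ^ k = 8 * c := ⟨(1 + 7 ^ k) / 8, by omega⟩
    set p := 7 ^ k with hp
    have hp1 : 7 ^ (k + 1) = 7 * p := by rw [hp]; ring
    have hp2 : 7 ^ (k + 1 + 1) = 49 * p := by rw [hp]; ring
    have e1 : 7 * (m + 1) - 1 = 7 * m + 6 := by omega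
    rw [hp1, hp2, e1]
    have e2 : p * (7 * m + 6) = 7 * (p * m) + 6 * p := by ring
    have e3 : 7 * p * (m + 1 - 1) = 7 * (p * m) := by rw [Nat.add_sub_cancel]; ring
    rw [e2, e3]
    omega
end
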